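/- For every N ≥ 1, the determinant of the regularized kernel matrix factors as a product over sequential posterior variances: det(K_N + σ² I_N) = ∏_{i=1}^N (σ² + σ_{i−1}²(x_i)). Equivalently, (1/2) log det(I_N + σ^{-2} K_N) = (1/2) ∑_{i=1}^N log(1 + σ^{-2} σ_{i−1}²(x_i)). -/

import Mathlib

open Matrix

/-- The `n × n` kernel matrix `K_n = [κ(x_i, x_j)]` built from the first `n`
points of the sequence `xs` (zero-indexed: `xs 0 = x_1`). -/
noncomputable def kerMat {D : Type*} (κ : D → D → ℝ) (xs : ℕ → D) (n : ℕ) :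
    Matrix (Fin n) (Fin n) ℝ :=
  Matrix.of fun i j => κ (xs i) (xs j)

/-- The kernel vector `k_n(x) = [κ(x_i, x)]_{i=1}^n`. -/
noncomputable def kerVec {D : Type*} (κ : D → D → ℝ) (xs : ℕ → D) (n : ℕ) (y : D) :
    Fin n → ℝ :=
  fun i => κ (xs i) y

/-- The posterior variance
`σ_n²(x) = κ(x,x) − k_n(x)ᵀ (K_n + σ² I_n)⁻¹ k_n(x)`;
for `n = 0` this is `κ(x,x)`. -/
noncomputable def postVar {D : Type*} (κ : D → D → ℝ) (xs : ℕ → D) (σ2 : ℝ)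
    (n : ℕ) (y : D) : ℝ :=
  κ y y -
    kerVec κ xs n y ⬝ᵥ
      ((kerMat κ xs n + σ2 • (1 : Matrix (Fin n) (Fin n) ℝ))⁻¹ *ᵥ kerVec κ xs n y)


lemma kerReg_posDef {D : Type*} (κ : D → D → ℝ)
    (hpsd : ∀ (n : ℕ) (z : Fin n → D),
      (Matrix.of fun i j => κ (z i) (z j)).PosSemidef)
    (σ2 : ℝ) (hσ2 : 0 < σ2) (xs : ℕ → D) (n : ℕ) :
    (kerMat κ xs n + σ2 • (1 : Matrix (Fin n) (Fin n) ℝ)).PosDef := by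
  have h1 : (σ2 • (1 : Matrix (Fin n) (Fin n) ℝ)).PosDef := by
    rw [smul_one_eq_diagonal]
    exact Matrix.posDef_diagonal_iff.mpr fun _ => hσ2
  exact Matrix.PosDef.posSemidef_add (hpsd n fun i => xs i) h1

lemma det_step {D : Type*} (κ : D → D → ℝ)
    (hsymm : ∀ a b : D, κ a b = κ b a)
    (hpsd : ∀ (n : ℕ) (z : Fin n → D),
      (Matrix.of fun i j => κ (z i) (z j)).PosSemidef)
    (σ2 : ℝ) (hσ2 : 0 < σ2) (xs : ℕ → D) (n : ℕ) :
    (kerMat κ xs (n + 1) + σ2 • (1 : Matrix (Fin (n+1)) (Fin (n+1)) ℝ)).det =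
      (kerMat κ xs n + σ2 • (1 : Matrix (Fin n) (Fin n) ℝ)).det *
        (σ2 + postVar κ xs σ2 n (xs n)) := by
  set A := kerMat κ xs n + σ2 • (1 : Matrix (Fin n) (Fin n) ℝ) with hAdef
  have hA : A.PosDef := kerReg_posDef κ hpsd σ2 hσ2 xs n
  haveI : Invertible A :=
    Matrix.invertibleOfIsUnitDet A (isUnit_iff_ne_zero.mpr hA.det_pos.ne')
  set B : Matrix (Fin n) (Fin 1) ℝ := Matrix.of fun i _ => κ (xs i) (xs n) with hB
  set C : Matrix (Fin 1) (Fin n) ℝ := Matrix.of fun _ j => κ (xs n) (xs j) with hC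
  set d : Matrix (Fin 1) (Fin 1) ℝ := Matrix.of fun _ _ => κ (xs n) (xs n) + σ2 with hd
  have key : kerMat κ xs (n+1) + σ2 • (1 : Matrix (Fin (n+1)) (Fin (n+1)) ℝ) =
      (fromBlocks A B C d).submatrix finSumFinEquiv.symm finSumFinEquiv.symm := by
    ext i j
    obtain ⟨i, rfl⟩ := finSumFinEquiv.surjective i
    obtain ⟨j, rfl⟩ := finSumFinEquiv.surjective j
    simp only [submatrix_apply, Equiv.symm_apply_apply]
    rcases i with i | i <;> rcases j with j | j <;>
      simp [fromBlocks, hAdef, hB, hC, hd, kerMat, Matrix.add_apply, Matrix.one_apply,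
        Fin.ext_iff, Fin.val_eq_zero, Matrix.smul_apply] <;> try omega
  rw [key, det_submatrix_equiv_self, det_fromBlocks₁₁, invOf_eq_nonsing_inv]
  congr 1
  rw [det_fin_one]
  have : (C * A⁻¹ * B) 0 0 = kerVec κ xs n (xs n) ⬝ᵥ (A⁻¹ *ᵥ kerVec κ xs n (xs n)) := by
    simp only [mul_apply, mulVec, dotProduct, kerVec, hB, hC, Matrix.of_apply,
      Finset.sum_mul, Finset.mul_sum]
    rw [Finset.sum_comm]
    refine Finset.sum_congr rfl fun i _ => Finset.sum_congr rfl fun j _ => ?_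
    rw [hsymm (xs n) (xs i)]; ring
  simp only [Matrix.sub_apply, this, postVar, hd, Matrix.of_apply]
  ring

lemma det_prod {D : Type*} (κ : D → D → ℝ)
    (hsymm : ∀ a b : D, κ a b = κ b a)
    (hpsd : ∀ (n : ℕ) (z : Fin n → D),
      (Matrix.of fun i j => κ (z i) (z j)).PosSemidef)
    (σ2 : ℝ) (hσ2 : 0 < σ2) (xs : ℕ → D) (n : ℕ) :
    (kerMat κ xs n + σ2 • (1 : Matrix (Fin n) (Fin n) ℝ)).det =
      ∏ i : Fin n, (σ2 + postVar κ xs σ2 i (xs i)) := by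
  induction n with
  | zero => simp [Matrix.det_isEmpty]
  | succ n ih =>
      rw [det_step κ hsymm hpsd σ2 hσ2 xs n, ih, Fin.prod_univ_castSucc]
      simp

/-- Determinant factorization over sequential posterior variances: for `N ≥ 1`,
`det(K_N + σ² I_N) = ∏_{i=1}^N (σ² + σ_{i−1}²(x_i))`, and equivalently
`(1/2) log det(I_N + σ^{-2} K_N) = (1/2) ∑_{i=1}^N log(1 + σ^{-2} σ_{i−1}²(x_i))`. -/
theorem det_regularized_kernel_product {D : Type*} [Nonempty D]
    (κ : D → D → ℝ)
    (hsymm : ∀ a b : D, κ a b = κ b a)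
    (hpsd : ∀ (n : ℕ) (z : Fin n → D),
      (Matrix.of fun i j => κ (z i) (z j)).PosSemidef)
    (σ2 : ℝ) (hσ2 : 0 < σ2)
    (xs : ℕ → D) (N : ℕ) (hN : 1 ≤ N) :
    (kerMat κ xs N + σ2 • (1 : Matrix (Fin N) (Fin N) ℝ)).det =
        ∏ i : Fin N, (σ2 + postVar κ xs σ2 i (xs i)) ∧
      (1 / 2 : ℝ) * Real.log ((1 + σ2⁻¹ • kerMat κ xs N).det) =
        (1 / 2 : ℝ) * ∑ i : Fin N, Real.log (1 + σ2⁻¹ * postVar κ xs σ2 i (xs i)) := by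
  have hpos : ∀ m : ℕ, 0 < σ2 + postVar κ xs σ2 m (xs m) := by
    intro m
    have h1 := (kerReg_posDef κ hpsd σ2 hσ2 xs m).det_pos
    have h2 := (kerReg_posDef κ hpsd σ2 hσ2 xs (m+1)).det_pos
    rw [det_step κ hsymm hpsd σ2 hσ2 xs m] at h2
    by_contra h
    nlinarith
  refine ⟨det_prod κ hsymm hpsd σ2 hσ2 xs N, ?_⟩
  have hmat : (1 + σ2⁻¹ • kerMat κ xs N) =
      σ2⁻¹ • (kerMat κ xs N + σ2 • (1 : Matrix (Fin N) (Fin N) ℝ)) := by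
    rw [smul_add, smul_smul, inv_mul_cancel₀ hσ2.ne', one_smul, add_comm]
  have hdet : (1 + σ2⁻¹ • kerMat κ xs N).det =
      ∏ i : Fin N, (1 + σ2⁻¹ * postVar κ xs σ2 i (xs i)) := by
    rw [hmat, Matrix.det_smul, det_prod κ hsymm hpsd σ2 hσ2 xs N, Fintype.card_fin,
      show (σ2⁻¹ ^ N) = ∏ _i : Fin N, σ2⁻¹ by simp, ← Finset.prod_mul_distrib]
    refine Finset.prod_congr rfl fun i _ => ?_
    field_simp
  rw [hdet, Real.log_prod]
  intro i _
  have := hpos i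
  have h1 : 0 < 1 + σ2⁻¹ * postVar κ xs σ2 i (xs i) := by
    have : 0 < σ2⁻¹ * (σ2 + postVar κ xs σ2 i (xs i)) :=
      mul_pos (inv_pos.mpr hσ2) (hpos i)
    calc (0:ℝ) < σ2⁻¹ * (σ2 + postVar κ xs σ2 i (xs i)) := this
      _ = 1 + σ2⁻¹ * postVar κ xs σ2 i (xs i) := by field_simp
  exact h1.ne'
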